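/- arXiv:0906.4609 — 7 statements merged into one kernel-verified Lean document; each statement's English description precedes it below -/
import Mathlib

section
/- Every critical independent set of a finite simple graph G is a local maximum independent set of G. -/
namespace KEPaper

open SimpleGraph

variable {V : Type*}

/-- `nbhd G S` is the set of vertices having a neighbor in `S`. -/
def nbhd (G : SimpleGraph V) (S : Set V) : Set V := {v | ∃ w ∈ S, G.Adj v w}

/-- `S` is an independent set of `G`: no two vertices of `S` are adjacent. -/
def IsIndep (G : SimpleGraph V) (S : Set V) : Prop :=
  S.Pairwise fun u v => ¬ G.Adj u v

/-- The independence number `α(G)`: maximum cardinality of an independent set. -/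
noncomputable def indepNum (G : SimpleGraph V) : ℕ :=
  sSup {n | ∃ S : Set V, IsIndep G S ∧ S.ncard = n}

/-- The matching number `μ(G)`: maximum cardinality of a matching. -/
noncomputable def matchNum (G : SimpleGraph V) : ℕ :=
  sSup {n | ∃ M : Subgraph G, M.IsMatching ∧ M.edgeSet.ncard = n}

/-- `S` is a maximum independent set of `G`. -/
def IsMaxIndep (G : SimpleGraph V) (S : Set V) : Prop :=
  IsIndep G S ∧ S.ncard = indepNum G

/-- The critical difference `d(G) = max {|S| - |N(S)| : S independent}`. -/
noncomputable def critDiff (G : SimpleGraph V) : ℤ :=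
  sSup {d : ℤ | ∃ S : Set V, IsIndep G S ∧ d = (S.ncard : ℤ) - ((nbhd G S).ncard : ℤ)}

/-- `S` is a critical independent set: independent with `|S| - |N(S)| = d(G)`. -/
def IsCritIndep (G : SimpleGraph V) (S : Set V) : Prop :=
  IsIndep G S ∧ (S.ncard : ℤ) - ((nbhd G S).ncard : ℤ) = critDiff G

/-- `core G` is the intersection of all maximum independent sets of `G`. -/
def core (G : SimpleGraph V) : Set V := ⋂ S ∈ {S : Set V | IsMaxIndep G S}, S

/-- `G` is a König–Egerváry graph: `|V(G)| = α(G) + μ(G)`. -/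
def KoenigEgervary (G : SimpleGraph V) : Prop :=
  Nat.card V = indepNum G + matchNum G

/-- `A` is a local maximum independent set of `G`: it is a maximum independent
set of the subgraph of `G` induced by `N[A] = A ∪ N(A)`. -/
def IsLocalMaxIndep (G : SimpleGraph V) (A : Set V) : Prop :=
  IsMaxIndep (G.induce (A ∪ nbhd G A)) {x : ↥(A ∪ nbhd G A) | ↑x ∈ A}

section Aux

lemma le_critDiff [Finite V] (G : SimpleGraph V) (S : Set V) (hS : IsIndep G S) :
    (S.ncard : ℤ) - ((nbhd G S).ncard : ℤ) ≤ critDiff G := by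
  apply le_csSup
  · refine ⟨(Nat.card V : ℤ), ?_⟩
    rintro d ⟨T, _, rfl⟩
    have h1 : (T.ncard : ℤ) ≤ (Nat.card V : ℤ) := by
      exact_mod_cast Set.ncard_le_ncard (Set.subset_univ T) Set.finite_univ |>.trans_eq
        (by rw [Set.ncard_univ])
    have h2 : (0 : ℤ) ≤ ((nbhd G T).ncard : ℤ) := Int.natCast_nonneg _
    omega
  · exact ⟨S, hS, rfl⟩

/-- Hall condition from criticality. -/
lemma hall_cond [Finite V] (G : SimpleGraph V) (A : Set V) (hA : IsCritIndep G A)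
    (T : Set V) (hT : T ⊆ nbhd G A) : T.ncard ≤ (A ∩ nbhd G T).ncard := by
  set A' := A \ nbhd G T with hA'
  have hindep : IsIndep G A' := hA.1.mono Set.diff_subset
  have hsub : nbhd G A' ⊆ nbhd G A \ T := by
    rintro v ⟨a, ha, hadj⟩
    refine ⟨⟨a, ha.1, hadj⟩, fun hvT => ha.2 ⟨v, hvT, hadj.symm⟩⟩
  have hle := le_critDiff G A' hindep
  rw [← hA.2] at hle
  have e1 : A'.ncard + (A ∩ nbhd G T).ncard = A.ncard := by
    have := Set.ncard_diff_add_ncard_of_subset (Set.inter_subset_left (s := A) (t := nbhd G T))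
      (Set.toFinite A)
    rw [Set.diff_self_inter] at this
    rw [hA']
    exact this
  have e2 : (nbhd G A \ T).ncard + T.ncard = (nbhd G A).ncard := by
    have := Set.ncard_diff_add_ncard_of_subset hT (Set.toFinite _)
    exact this
  have e3 : (nbhd G A').ncard ≤ (nbhd G A \ T).ncard :=
    Set.ncard_le_ncard hsub (Set.toFinite _)
  omega

/-- Existence of a matching from `N(A)` into `A`. -/
lemma exists_matching [Finite V] (G : SimpleGraph V) (A : Set V) (hA : IsCritIndep G A) :
    ∃ f : ↥(nbhd G A) → V, Function.Injective f ∧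
      ∀ v : ↥(nbhd G A), f v ∈ A ∧ G.Adj (f v) ↑v := by
  classical
  have := Fintype.ofFinite V
  set t : ↥(nbhd G A) → Finset V := fun v => {a | a ∈ A ∧ G.Adj a ↑v} with ht
  have hall : ∀ s : Finset ↥(nbhd G A), s.card ≤ (s.biUnion t).card := by
    intro s
    have hsub : (Subtype.val '' (s : Set ↥(nbhd G A))) ⊆ nbhd G A := by
      rintro v ⟨w, _, rfl⟩; exact w.2
    have hc := hall_cond G A hA _ hsub
    have e1 : (Subtype.val '' (s : Set ↥(nbhd G A))).ncard = s.card := by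
      rw [Set.ncard_image_of_injective _ Subtype.coe_injective, Set.ncard_coe_finset]
    have e2 : A ∩ nbhd G (Subtype.val '' (s : Set ↥(nbhd G A))) = ↑(s.biUnion t) := by
      ext a
      rw [Finset.mem_coe, Finset.mem_biUnion]
      simp only [Finset.coe_biUnion, Set.mem_iUnion, Finset.mem_coe, ht, Finset.mem_filter,
        Set.mem_inter_iff, Finset.mem_univ, nbhd, Set.mem_setOf_eq, Set.mem_image]
      constructor
      · rintro ⟨haA, w, ⟨x, hx, rfl⟩, hadj⟩
        exact ⟨x, hx, by simpa using ⟨haA, hadj⟩⟩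
      · rintro ⟨x, hx, h⟩
        exact ⟨h.2.1, ↑x, ⟨x, hx, rfl⟩, h.2.2⟩
    rw [e1, e2, Set.ncard_coe_finset] at hc
    exact hc
  obtain ⟨f, hinj, hf⟩ := (Finset.all_card_le_biUnion_card_iff_exists_injective t).mp hall
  refine ⟨f, hinj, fun v => ?_⟩
  have := hf v
  rw [ht] at this
  exact by simpa using this

/-- Any independent set contained in `N[A]` has size at most `|A|`. -/
lemma indep_le [Finite V] (G : SimpleGraph V) (A : Set V) (hA : IsCritIndep G A)
    (B : Set V) (hB : IsIndep G B) (hBsub : B ⊆ A ∪ nbhd G A) : B.ncard ≤ A.ncard := by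
  classical
  obtain ⟨f, hinj, hf⟩ := exists_matching G A hA
  set g : V → V := fun b => if h : b ∈ A then b else
    (if h2 : b ∈ nbhd G A then f ⟨b, h2⟩ else b) with hg
  apply Set.ncard_le_ncard_of_injOn g
  · intro b hb
    by_cases h : b ∈ A
    · simp [hg, h]
    · have h2 : b ∈ nbhd G A := (hBsub hb).resolve_left h
      simp only [hg, dif_neg h, dif_pos h2]
      exact (hf ⟨b, h2⟩).1
  · intro b hb b' hb' heq
    by_cases h : b ∈ A <;> by_cases h' : b' ∈ A
    · simpa [hg, h, h'] using heq
    · exfalso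
      have h2 : b' ∈ nbhd G A := (hBsub hb').resolve_left h'
      simp only [hg, dif_pos h, dif_neg h', dif_pos h2] at heq
      have hadj : G.Adj b ↑(⟨b', h2⟩ : ↥(nbhd G A)) := heq ▸ (hf ⟨b', h2⟩).2
      exact hB hb hb' (fun e => G.loopless.irrefl b (e ▸ hadj)) hadj
    · exfalso
      have h2 : b ∈ nbhd G A := (hBsub hb).resolve_left h
      simp only [hg, dif_neg h, dif_pos h2, dif_pos h'] at heq
      have hadj : G.Adj b' ↑(⟨b, h2⟩ : ↥(nbhd G A)) := heq ▸ (hf ⟨b, h2⟩).2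
      exact hB hb' hb (fun e => G.loopless.irrefl b' (e ▸ hadj)) hadj
    · have h2 : b ∈ nbhd G A := (hBsub hb).resolve_left h
      have h2' : b' ∈ nbhd G A := (hBsub hb').resolve_left h'
      simp only [hg, dif_neg h, dif_pos h2, dif_neg h', dif_pos h2'] at heq
      exact congrArg Subtype.val (hinj heq)

end Aux

/-- Every critical independent set of a finite simple graph `G` is a local
maximum independent set of `G`. -/
theorem critIndep_isLocalMaxIndep [Finite V] (G : SimpleGraph V) (A : Set V)
    (hA : IsCritIndep G A) : IsLocalMaxIndep G A := by
  classical
  set U := A ∪ nbhd G A with hU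
  set Abar : Set ↥U := {x : ↥U | ↑x ∈ A} with hAbar
  have himg : Subtype.val '' Abar = A := by
    ext a
    simp only [hAbar, Set.mem_image, Set.mem_setOf_eq]
    constructor
    · rintro ⟨x, hx, rfl⟩; exact hx
    · intro ha; exact ⟨⟨a, Or.inl ha⟩, ha, rfl⟩
  have hcard : Abar.ncard = A.ncard := by
    rw [← himg, Set.ncard_image_of_injective _ Subtype.coe_injective]
  have hAbarIndep : IsIndep (G.induce U) Abar := by
    intro x hx y hy hne hadj
    exact hA.1 hx hy (fun e => hne (Subtype.ext e)) hadj
  constructor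
  · exact hAbarIndep
  · rw [hcard]
    symm
    apply IsGreatest.csSup_eq
    constructor
    · exact ⟨Abar, hAbarIndep, hcard⟩
    · rintro n ⟨S, hS, rfl⟩
      have hSimg : IsIndep G (Subtype.val '' S) := by
        rintro _ ⟨x, hx, rfl⟩ _ ⟨y, hy, rfl⟩ hne hadj
        exact hS hx hy (fun e => hne (congrArg Subtype.val e)) hadj
      have hsub : Subtype.val '' S ⊆ U := by
        rintro _ ⟨x, _, rfl⟩; exact x.2
      have := indep_le G A hA _ hSimg hsub
      rwa [Set.ncard_image_of_injective _ Subtype.coe_injective] at this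

end KEPaper
end

section
/- Every critical independent set of a finite simple graph G is contained in some maximum independent set of G. -/
namespace KEPaper

open SimpleGraph

variable {V : Type*}

/-- Every critical independent set of a finite simple graph `G` is contained in
some maximum independent set of `G`. -/
theorem critIndep_subset_maxIndep [Finite V] (G : SimpleGraph V) (A : Set V)
    (hA : IsCritIndep G A) : ∃ S : Set V, IsMaxIndep G S ∧ A ⊆ S := by
  obtain ⟨hAind, hAcrit⟩ := hA
  have hbdd : BddAbove {n | ∃ S : Set V, IsIndep G S ∧ S.ncard = n} := by
    refine ⟨Nat.card V, ?_⟩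
    rintro n ⟨S, -, rfl⟩
    simpa [Set.ncard_univ] using Set.ncard_le_ncard (Set.subset_univ S) (Set.toFinite _)
  have hne : {n | ∃ S : Set V, IsIndep G S ∧ S.ncard = n}.Nonempty :=
    ⟨0, ∅, by simp [IsIndep], by simp⟩
  obtain ⟨S, hSind, hScard⟩ : ∃ S : Set V, IsIndep G S ∧ S.ncard = indepNum G :=
    Nat.sSup_mem hne hbdd
  -- criticality applied to A ∩ S
  have hASind : IsIndep G (A ∩ S) := hAind.mono Set.inter_subset_left
  have hZbdd : BddAbove {d : ℤ | ∃ S : Set V, IsIndep G S ∧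
      d = (S.ncard : ℤ) - ((nbhd G S).ncard : ℤ)} := by
    refine ⟨(Nat.card V : ℤ), ?_⟩
    rintro d ⟨T, -, rfl⟩
    have h1 : T.ncard ≤ Nat.card V := by
      simpa [Set.ncard_univ] using Set.ncard_le_ncard (Set.subset_univ T) (Set.toFinite _)
    have h2 : (0 : ℤ) ≤ ((nbhd G T).ncard : ℤ) := by positivity
    omega
  have hcrit : ((A ∩ S).ncard : ℤ) - ((nbhd G (A ∩ S)).ncard : ℤ) ≤
      (A.ncard : ℤ) - ((nbhd G A).ncard : ℤ) := by
    rw [hAcrit]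
    exact le_csSup hZbdd ⟨A ∩ S, hASind, rfl⟩
  -- N(A∩S) and S∩N(A) are disjoint subsets of N(A)
  have hsub1 : nbhd G (A ∩ S) ⊆ nbhd G A := by
    rintro v ⟨w, hw, hadj⟩; exact ⟨w, hw.1, hadj⟩
  have hsub2 : S ∩ nbhd G A ⊆ nbhd G A := Set.inter_subset_right
  have hdisj : Disjoint (nbhd G (A ∩ S)) (S ∩ nbhd G A) := by
    rw [Set.disjoint_left]
    rintro v ⟨w, hw, hadj⟩ ⟨hvS, -⟩
    exact hSind hvS hw.2 (G.ne_of_adj hadj) hadj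
  have hcount : (nbhd G (A ∩ S)).ncard + (S ∩ nbhd G A).ncard ≤ (nbhd G A).ncard := by
    rw [← Set.ncard_union_eq hdisj (Set.toFinite _) (Set.toFinite _)]
    exact Set.ncard_le_ncard (Set.union_subset hsub1 hsub2) (Set.toFinite _)
  -- key inequality: |A\S| part, i.e. |A| ≥ |A∩S| + |S∩N(A)|
  have hkey : (A ∩ S).ncard + (S ∩ nbhd G A).ncard ≤ A.ncard := by
    have := hcrit
    omega
  -- the new independent set
  set S' : Set V := A ∪ (S \ nbhd G A) with hS'
  have hS'ind : IsIndep G S' := by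
    rintro u (huA | ⟨huS, huN⟩) v (hvA | ⟨hvS, hvN⟩) hne hadj
    · exact hAind huA hvA hne hadj
    · exact hvN ⟨u, huA, hadj.symm⟩
    · exact huN ⟨v, hvA, hadj⟩
    · exact hSind huS hvS hne hadj
  have hAS' : A ⊆ S' := Set.subset_union_left
  -- cardinality computations
  have hAN : A ∩ nbhd G A = ∅ := by
    ext v
    simp only [Set.mem_inter_iff, Set.mem_empty_iff_false, iff_false, not_and]
    rintro hvA ⟨w, hwA, hadj⟩
    exact hAind hvA hwA (G.ne_of_adj hadj) hadj
  have hinter : A ∩ (S \ nbhd G A) = A ∩ S := by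
    ext v
    constructor
    · rintro ⟨h1, h2, -⟩; exact ⟨h1, h2⟩
    · rintro ⟨h1, h2⟩
      refine ⟨h1, h2, fun hv => ?_⟩
      exact Set.eq_empty_iff_forall_notMem.mp hAN v ⟨h1, hv⟩
  have hu : S'.ncard + (A ∩ S).ncard = A.ncard + (S \ nbhd G A).ncard := by
    rw [hS', ← hinter]
    exact Set.ncard_union_add_ncard_inter A (S \ nbhd G A) (Set.toFinite _) (Set.toFinite _)
  have hSsplit : (S ∩ nbhd G A).ncard + (S \ nbhd G A).ncard = S.ncard :=
    Set.ncard_inter_add_ncard_diff_eq_ncard S (nbhd G A) (Set.toFinite _)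
  have hge : S.ncard ≤ S'.ncard := by omega
  have hle : S'.ncard ≤ indepNum G := le_csSup hbdd ⟨S', hS'ind, rfl⟩
  exact ⟨S', ⟨hS'ind, le_antisymm hle (hScard ▸ hge)⟩, hAS'⟩

end KEPaper
end

section
/- If G is a finite König–Egerváry graph, then the critical difference of G satisfies d(G) = |core(G)| − |N(core(G))|, where core(G) is the intersection of all maximum independent sets of G. -/
namespace KEPaper

open SimpleGraph

variable {V : Type*}

/-! ### Auxiliary lemmas -/

lemma nbhd_union (G : SimpleGraph V) (A B : Set V) :
    nbhd G (A ∪ B) = nbhd G A ∪ nbhd G B := by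
  ext v; simp only [nbhd, Set.mem_setOf_eq, Set.mem_union]
  constructor
  · rintro ⟨w, hw | hw, ha⟩
    · exact Or.inl ⟨w, hw, ha⟩
    · exact Or.inr ⟨w, hw, ha⟩
  · rintro (⟨w, hw, ha⟩ | ⟨w, hw, ha⟩)
    · exact ⟨w, Or.inl hw, ha⟩
    · exact ⟨w, Or.inr hw, ha⟩

lemma nbhd_inter_subset (G : SimpleGraph V) (A B : Set V) :
    nbhd G (A ∩ B) ⊆ nbhd G A ∩ nbhd G B := by
  rintro v ⟨w, ⟨hwA, hwB⟩, ha⟩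
  exact ⟨⟨w, hwA, ha⟩, ⟨w, hwB, ha⟩⟩

lemma IsIndep.mono {G : SimpleGraph V} {A B : Set V} (hB : IsIndep G B) (h : A ⊆ B) :
    IsIndep G A := Set.Pairwise.mono h hB

lemma indep_bddAbove [Finite V] (G : SimpleGraph V) :
    BddAbove {n | ∃ S : Set V, IsIndep G S ∧ S.ncard = n} := by
  refine ⟨Nat.card V, ?_⟩
  rintro n ⟨S, -, rfl⟩
  rw [← Nat.card_coe_set_eq]; exact Nat.card_le_card_of_injective _ Subtype.val_injective

/-- There exists a maximum independent set. -/
lemma exists_maxIndep [Finite V] (G : SimpleGraph V) : ∃ S, IsMaxIndep G S := by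
  have hne : ({n | ∃ S : Set V, IsIndep G S ∧ S.ncard = n} : Set ℕ).Nonempty :=
    ⟨0, ∅, by simp [IsIndep], by simp⟩
  obtain ⟨S, hS, hcard⟩ := Nat.sSup_mem hne (indep_bddAbove G)
  exact ⟨S, hS, hcard⟩

lemma ncard_le_indepNum [Finite V] {G : SimpleGraph V} {S : Set V} (hS : IsIndep G S) :
    S.ncard ≤ indepNum G := le_csSup (indep_bddAbove G) ⟨S, hS, rfl⟩

/-- For a maximum independent set, `N(S) = V ∖ S`. -/
lemma maxIndep_nbhd [Finite V] {G : SimpleGraph V} {S : Set V} (hS : IsMaxIndep G S) :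
    nbhd G S = Sᶜ := by
  obtain ⟨hind, hcard⟩ := hS
  apply Set.eq_of_subset_of_subset
  · rintro v ⟨w, hw, ha⟩ hv
    exact hind hv hw (G.ne_of_adj ha.symm).symm ha
  · intro v hv
    by_contra hvn
    have hins : IsIndep G (insert v S) := by
      intro a ha b hb hab
      rcases ha with rfl | ha
      · rcases hb with rfl | hb
        · exact absurd rfl hab
        · exact fun h => hvn ⟨b, hb, h⟩
      · rcases hb with rfl | hb
        · exact fun h => hvn ⟨a, ha, h.symm⟩
        · exact hind ha hb hab
    have : (insert v S).ncard = S.ncard + 1 := Set.ncard_insert_of_notMem hv (Set.toFinite S)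
    have := ncard_le_indepNum hins
    omega

/-- Double counting: a matching covers `2|M|` vertices. -/
lemma matching_verts_ncard [Finite V] {G : SimpleGraph V} {M : Subgraph G}
    (h : M.IsMatching) : M.verts.ncard = 2 * M.edgeSet.ncard := by
  classical
  have := Fintype.ofFinite V
  rw [Set.ncard_eq_toFinset_card', Set.ncard_eq_toFinset_card']
  set f : V → Sym2 V := fun v =>
    if hv : v ∈ M.verts then ((h.toEdge ⟨v, hv⟩ : M.edgeSet) : Sym2 V) else s(v, v) with hf
  have hmem : ∀ x ∈ M.verts.toFinset, f x ∈ M.edgeSet.toFinset := by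
    intro x hx
    rw [Set.mem_toFinset] at hx
    simp only [hf, dif_pos hx, Set.mem_toFinset]
    exact (h.toEdge ⟨x, hx⟩).2
  have fib : ∀ e ∈ M.edgeSet.toFinset,
      (M.verts.toFinset.filter (fun v => f v = e)).card = 2 := by
    intro e he
    rw [Set.mem_toFinset] at he
    induction e using Sym2.ind with | _ u w => ?_
    have hadj : M.Adj u w := Subgraph.mem_edgeSet.mp he
    have hne : u ≠ w := hadj.ne
    have hfilter : M.verts.toFinset.filter (fun v => f v = s(u, w)) = {u, w} := by
      ext v
      simp only [Finset.mem_filter, Set.mem_toFinset, Finset.mem_insert, Finset.mem_singleton]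
      constructor
      · rintro ⟨hv, hfv⟩
        have : v ∈ (f v : Sym2 V) := by
          simp only [hf, dif_pos hv]
          obtain ⟨z, hz, -⟩ := h hv
          rw [h.toEdge_eq_of_adj hz]
          exact Sym2.mem_mk_left v z
        rw [hfv] at this
        exact Sym2.mem_iff.mp this
      · rintro (rfl | rfl)
        · refine ⟨M.edge_vert hadj, ?_⟩
          simp only [hf, dif_pos (M.edge_vert hadj)]
          rw [h.toEdge_eq_of_adj hadj]
        · refine ⟨M.edge_vert hadj.symm, ?_⟩
          simp only [hf, dif_pos (M.edge_vert hadj.symm)]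
          rw [h.toEdge_eq_of_adj hadj.symm]
          exact Sym2.eq_swap
    rw [hfilter, Finset.card_insert_of_notMem (by simpa using hne), Finset.card_singleton]
  calc M.verts.toFinset.card
      = ∑ e ∈ M.edgeSet.toFinset, (M.verts.toFinset.filter (fun v => f v = e)).card :=
        Finset.card_eq_sum_card_fiberwise hmem
    _ = ∑ _e ∈ M.edgeSet.toFinset, 2 := Finset.sum_congr rfl fib
    _ = 2 * M.edgeSet.toFinset.card := by rw [Finset.sum_const, smul_eq_mul, mul_comm]

/-- For any vertex set `X`, the vertices covered by a matching inject into
`Xᶜ ⊕ N(X)`. -/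
lemma matching_verts_le [Finite V] {G : SimpleGraph V} {M : Subgraph G}
    (h : M.IsMatching) (X : Set V) :
    M.verts.ncard ≤ Xᶜ.ncard + (nbhd G X).ncard := by
  classical
  have key : ∃ g : M.verts → (↥Xᶜ ⊕ ↥(nbhd G X)), Function.Injective g := by
    have hpart : ∀ v : M.verts, ∃ w, M.Adj ↑v w := fun v => ((h v.2).exists)
    choose p hp using hpart
    refine ⟨fun v => if hv : (v : V) ∈ X then
        (if hpv : p v ∈ X then Sum.inr ⟨v, p v, hpv, (hp v).adj_sub⟩
         else Sum.inr ⟨p v, v, hv, ((hp v).adj_sub).symm⟩)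
      else Sum.inl ⟨v, hv⟩, ?_⟩
    intro v1 v2 hg
    dsimp only at hg
    by_cases h1 : (v1 : V) ∈ X
    · rw [dif_pos h1] at hg
      by_cases h2 : (v2 : V) ∈ X
      · rw [dif_pos h2] at hg
        by_cases hp1 : p v1 ∈ X
        · rw [dif_pos hp1] at hg
          by_cases hp2 : p v2 ∈ X
          · rw [dif_pos hp2] at hg
            injection hg with hg2
            exact Subtype.ext (Subtype.mk_eq_mk.mp hg2)
          · rw [dif_neg hp2] at hg
            have heq : (v1 : V) = p v2 := by
              injection hg with hg2; exact congrArg Subtype.val hg2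
            exact absurd (heq ▸ h1) hp2
        · rw [dif_neg hp1] at hg
          by_cases hp2 : p v2 ∈ X
          · rw [dif_pos hp2] at hg
            have heq : p v1 = (v2 : V) := by
              injection hg with hg2; exact congrArg Subtype.val hg2
            have : p v1 ∈ X := by rw [heq]; exact h2
            exact absurd this hp1
          · rw [dif_neg hp2] at hg
            have heq : p v1 = p v2 := by
              injection hg with hg2; exact congrArg Subtype.val hg2
            have hz1 : M.Adj (p v1) ↑v1 := (hp v1).symm
            have hz2 : M.Adj (p v1) ↑v2 := by rw [heq]; exact (hp v2).symm
            obtain ⟨w, -, hw⟩ := h (M.edge_vert hz1)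
            exact Subtype.ext ((hw _ hz1).trans (hw _ hz2).symm)
      · rw [dif_neg h2] at hg
        split_ifs at hg
    · rw [dif_neg h1] at hg
      by_cases h2 : (v2 : V) ∈ X
      · rw [dif_pos h2] at hg
        split_ifs at hg
      · rw [dif_neg h2] at hg
        injection hg with hg2
        exact Subtype.ext (Subtype.mk_eq_mk.mp hg2)
  obtain ⟨g, hg⟩ := key
  have := Nat.card_le_card_of_injective g hg
  rwa [Nat.card_sum, Nat.card_coe_set_eq, Nat.card_coe_set_eq,
    Nat.card_coe_set_eq] at this

/-- There exists a maximum matching. -/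
lemma exists_maxMatching [Finite V] (G : SimpleGraph V) :
    ∃ M : Subgraph G, M.IsMatching ∧ M.edgeSet.ncard = matchNum G := by
  have hne : ({n | ∃ M : Subgraph G, M.IsMatching ∧ M.edgeSet.ncard = n} : Set ℕ).Nonempty := by
    refine ⟨0, ⊥, ?_, by simp [Subgraph.edgeSet_bot]⟩
    intro v hv
    rw [Subgraph.verts_bot] at hv
    exact absurd hv (Set.notMem_empty v)
  have hbdd : BddAbove {n | ∃ M : Subgraph G, M.IsMatching ∧ M.edgeSet.ncard = n} := by
    refine ⟨Nat.card (Sym2 V), ?_⟩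
    rintro n ⟨M, -, rfl⟩
    simpa [Nat.card_coe_set_eq] using Nat.card_le_card_of_injective _
      (Subtype.val_injective : Function.Injective ((↑) : M.edgeSet → Sym2 V))
  obtain ⟨M, hM, hcard⟩ := Nat.sSup_mem hne hbdd
  exact ⟨M, hM, hcard⟩

/-- The key bound: for every vertex set `X`, `|X| - |N(X)| ≤ |V| - 2μ(G)`. -/
lemma fdiff_le [Finite V] (G : SimpleGraph V) (X : Set V) :
    (X.ncard : ℤ) - ((nbhd G X).ncard : ℤ) ≤ (Nat.card V : ℤ) - 2 * matchNum G := by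
  obtain ⟨M, hM, hcard⟩ := exists_maxMatching G
  have h1 : 2 * matchNum G ≤ Xᶜ.ncard + (nbhd G X).ncard := by
    rw [← hcard, ← matching_verts_ncard hM]
    exact matching_verts_le hM X
  have h2 : X.ncard + Xᶜ.ncard = Nat.card V := Set.ncard_add_ncard_compl X
  omega

/-- Supermodularity of `|X| - |N(X)|`. -/
lemma fdiff_supermod [Finite V] (G : SimpleGraph V) (A B : Set V) :
    ((A.ncard : ℤ) - (nbhd G A).ncard) + ((B.ncard : ℤ) - (nbhd G B).ncard) ≤
      (((A ∩ B).ncard : ℤ) - (nbhd G (A ∩ B)).ncard) +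
      (((A ∪ B).ncard : ℤ) - (nbhd G (A ∪ B)).ncard) := by
  have hc : (A ∪ B).ncard + (A ∩ B).ncard = A.ncard + B.ncard :=
    Set.ncard_union_add_ncard_inter A B (Set.toFinite A) (Set.toFinite B)
  have hn : (nbhd G A ∪ nbhd G B).ncard + (nbhd G A ∩ nbhd G B).ncard =
      (nbhd G A).ncard + (nbhd G B).ncard :=
    Set.ncard_union_add_ncard_inter _ _ (Set.toFinite _) (Set.toFinite _)
  have h3 : (nbhd G (A ∪ B)).ncard = (nbhd G A ∪ nbhd G B).ncard := by
    rw [nbhd_union]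
  have h4 : (nbhd G (A ∩ B)).ncard ≤ (nbhd G A ∩ nbhd G B).ncard :=
    Set.ncard_le_ncard (nbhd_inter_subset G A B) (Set.toFinite _)
  omega

/-- In a König–Egerváry graph, every maximum independent set `S` has
`|S| - |N(S)| = α - μ`. -/
lemma maxIndep_fdiff [Finite V] {G : SimpleGraph V} (hG : KoenigEgervary G)
    {S : Set V} (hS : IsMaxIndep G S) :
    (S.ncard : ℤ) - ((nbhd G S).ncard : ℤ) = (indepNum G : ℤ) - matchNum G := by
  have h1 : nbhd G S = Sᶜ := maxIndep_nbhd hS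
  have h2 : S.ncard + Sᶜ.ncard = Nat.card V := Set.ncard_add_ncard_compl S
  have h3 : S.ncard = indepNum G := hS.2
  have h4 : Nat.card V = indepNum G + matchNum G := hG
  rw [h1]
  omega

lemma nat_card_sub_two_matchNum [Finite V] {G : SimpleGraph V} (hG : KoenigEgervary G) :
    (Nat.card V : ℤ) - 2 * matchNum G = (indepNum G : ℤ) - matchNum G := by
  have h4 : Nat.card V = indepNum G + matchNum G := hG
  omega

/-- In a König–Egerváry graph, the core is independent and critical with value
`α - μ`. -/
lemma core_indep_and_fdiff [Finite V] (G : SimpleGraph V) (hG : KoenigEgervary G) :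
    IsIndep G (core G) ∧
      ((core G).ncard : ℤ) - ((nbhd G (core G)).ncard : ℤ) =
        (indepNum G : ℤ) - matchNum G := by
  classical
  obtain ⟨S₀, hS₀⟩ := exists_maxIndep G
  set F : Set (Set V) := {S : Set V | IsMaxIndep G S} with hF
  have hS₀F : S₀ ∈ F := hS₀
  have hcore : core G = ⋂₀ F := by
    rw [core, ← Set.sInter_eq_biInter]
  -- key induction
  have hmain : IsIndep G (S₀ ∩ ⋂₀ F) ∧
      (indepNum G : ℤ) - matchNum G ≤
        ((S₀ ∩ ⋂₀ F).ncard : ℤ) - ((nbhd G (S₀ ∩ ⋂₀ F)).ncard : ℤ) := by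
    refine Set.Finite.induction_on_subset
      (motive := fun F' _ => IsIndep G (S₀ ∩ ⋂₀ F') ∧
        (indepNum G : ℤ) - matchNum G ≤
          ((S₀ ∩ ⋂₀ F').ncard : ℤ) - ((nbhd G (S₀ ∩ ⋂₀ F')).ncard : ℤ))
      F (Set.toFinite F) ?_ ?_
    · show IsIndep G (S₀ ∩ ⋂₀ ∅) ∧ _
      rw [Set.sInter_empty, Set.inter_univ]
      exact ⟨hS₀.1, le_of_eq (maxIndep_fdiff hG hS₀).symm⟩
    · rintro T F'' hTF hF''sub - ihh
      have hT : IsMaxIndep G T := hTF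
      show IsIndep G (S₀ ∩ ⋂₀ insert T F'') ∧ _
      rw [Set.sInter_insert]
      set B := S₀ ∩ ⋂₀ F'' with hB
      have hre : S₀ ∩ (T ∩ ⋂₀ F'') = T ∩ B := by
        rw [hB]; ext x; simp only [Set.mem_inter_iff]; tauto
      rw [hre]
      have hfT : (T.ncard : ℤ) - ((nbhd G T).ncard : ℤ) = (indepNum G : ℤ) - matchNum G :=
        maxIndep_fdiff hG hT
      have hsup := fdiff_supermod G T B
      have hun : ((T ∪ B).ncard : ℤ) - ((nbhd G (T ∪ B)).ncard : ℤ) ≤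
          (indepNum G : ℤ) - matchNum G := by
        rw [← nat_card_sub_two_matchNum hG]
        exact fdiff_le G (T ∪ B)
      refine ⟨(ihh.1).mono Set.inter_subset_right, ?_⟩
      have := ihh.2
      omega
  have hsub : ⋂₀ F ⊆ S₀ := Set.sInter_subset_of_mem hS₀F
  have heq : S₀ ∩ ⋂₀ F = ⋂₀ F := Set.inter_eq_self_of_subset_right hsub
  rw [heq] at hmain
  rw [hcore]
  refine ⟨hmain.1, le_antisymm ?_ hmain.2⟩
  rw [← nat_card_sub_two_matchNum hG]
  exact fdiff_le G (⋂₀ F)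

/-- If `G` is a finite König–Egerváry graph, then
`d(G) = |core(G)| - |N(core(G))|`. -/
theorem critDiff_eq_core_sub_nbhd_core [Finite V] (G : SimpleGraph V)
    (hG : KoenigEgervary G) :
    critDiff G = ((core G).ncard : ℤ) - ((nbhd G (core G)).ncard : ℤ) := by
  obtain ⟨hcind, hcval⟩ := core_indep_and_fdiff G hG
  set D : Set ℤ :=
    {d : ℤ | ∃ S : Set V, IsIndep G S ∧ d = (S.ncard : ℤ) - ((nbhd G S).ncard : ℤ)} with hD
  have hub : ∀ x ∈ D, x ≤ ((core G).ncard : ℤ) - ((nbhd G (core G)).ncard : ℤ) := by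
    rintro x ⟨S, -, rfl⟩
    rw [hcval, ← nat_card_sub_two_matchNum hG]
    exact fdiff_le G S
  have hne : D.Nonempty := by
    refine ⟨0, ∅, by simp [IsIndep], ?_⟩
    have : nbhd G ∅ = (∅ : Set V) := by
      ext v; simp [nbhd]
    rw [this]; simp
  have hmem : ((core G).ncard : ℤ) - ((nbhd G (core G)).ncard : ℤ) ∈ D :=
    ⟨core G, hcind, rfl⟩
  exact le_antisymm (csSup_le hne hub) (le_csSup ⟨_, hub⟩ hmem)

end KEPaper
end

section
/- If G is a finite König–Egerváry graph, then the critical difference of G equals the deficiency of G: d(G) = |V(G)| − 2μ(G). -/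
namespace KEPaper

open SimpleGraph

variable {V : Type*}

lemma matching_two_mul_ncard {G : SimpleGraph V} [Finite V] {M : Subgraph G}
    (h : M.IsMatching) : M.verts.ncard = 2 * M.edgeSet.ncard := by
  classical
  haveI : Fintype V := Fintype.ofFinite V
  haveI : Fintype M.verts := Fintype.ofFinite _
  have hdeg := (Subgraph.isMatching_iff_forall_degree).mp h
  have h1 : M.verts.toFinset.card = 2 * M.coe.edgeFinset.card := by
    rw [← M.coe.sum_degrees_eq_twice_card_edges]
    have hc : ∀ (v : M.verts) (inst : Fintype (M.coe.neighborSet v)),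
        @SimpleGraph.degree _ M.coe v inst = 1 := by
      intro v inst
      have := M.coe_degree v
      convert this.trans ?_ using 2
      convert hdeg v v.2 using 2
    simp [hc]
  have h2 : M.edgeSet.ncard = M.coe.edgeSet.ncard := by
    rw [← Subgraph.image_coe_edgeSet_coe,
      Set.ncard_image_of_injective _ (Sym2.map.injective Subtype.val_injective)]
  rw [Set.ncard_eq_toFinset_card', h1, h2, Set.ncard_eq_toFinset_card']
  congr 2

/-- If `G` is a finite König–Egerváry graph, then `d(G) = |V(G)| - 2μ(G)`,
the deficiency of `G`. -/
theorem critDiff_eq_deficiency [Finite V] (G : SimpleGraph V)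
    (hG : KoenigEgervary G) :
    critDiff G = (Nat.card V : ℤ) - 2 * (matchNum G : ℤ) := by
  classical
  -- a maximum independent set exists
  obtain ⟨S, hSi, hScard⟩ : ∃ S, IsIndep G S ∧ S.ncard = indepNum G := by
    have hne : Set.Nonempty {n | ∃ S : Set V, IsIndep G S ∧ S.ncard = n} :=
      ⟨0, ∅, by simp [IsIndep], by simp⟩
    have hbdd : BddAbove {n | ∃ S : Set V, IsIndep G S ∧ S.ncard = n} := by
      refine ⟨Nat.card V, ?_⟩
      rintro n ⟨S, -, rfl⟩
      exact (Set.ncard_le_ncard (Set.subset_univ S) Set.finite_univ).trans_eq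
        (Set.ncard_univ V)
    exact Nat.sSup_mem hne hbdd
  -- a maximum matching exists
  obtain ⟨M, hM, hMcard⟩ :
      ∃ M : Subgraph G, M.IsMatching ∧ M.edgeSet.ncard = matchNum G := by
    have hne : Set.Nonempty {n | ∃ M : Subgraph G, M.IsMatching ∧ M.edgeSet.ncard = n} :=
      ⟨0, ⊥, by intro v hv; simp at hv, by simp⟩
    have hbdd : BddAbove {n | ∃ M : Subgraph G, M.IsMatching ∧ M.edgeSet.ncard = n} := by
      refine ⟨Nat.card (Sym2 V), ?_⟩
      rintro n ⟨M, -, rfl⟩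
      exact (Set.ncard_le_ncard (Set.subset_univ _) Set.finite_univ).trans_eq
        (Set.ncard_univ _)
    exact Nat.sSup_mem hne hbdd
  have hverts : M.verts.ncard = 2 * matchNum G := by
    rw [matching_two_mul_ncard hM, hMcard]
  have hcomplM : M.verts.ncard + M.vertsᶜ.ncard = Nat.card V :=
    Set.ncard_add_ncard_compl M.verts
  -- every element of the critDiff set is at most the deficiency
  have key : ∀ d ∈ {d : ℤ | ∃ S : Set V, IsIndep G S ∧
      d = (S.ncard : ℤ) - ((nbhd G S).ncard : ℤ)},
      d ≤ (Nat.card V : ℤ) - 2 * (matchNum G : ℤ) := by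
    rintro d ⟨T, hT, rfl⟩
    -- partner function for matched vertices
    choose f hf using fun (v : V) (hv : v ∈ M.verts) => (hM hv).exists
    set g : V → V := fun v => if hv : v ∈ M.verts then f v hv else v with hg
    have hgadj : ∀ v ∈ M.verts, M.Adj v (g v) := by
      intro v hv; simp only [hg, dif_pos hv]; exact hf v hv
    have himg : g '' (T ∩ M.verts) ⊆ nbhd G T := by
      rintro _ ⟨v, ⟨hvT, hvM⟩, rfl⟩
      exact ⟨v, hvT, (M.adj_sub (hgadj v hvM)).symm⟩
    have hinj : Set.InjOn g (T ∩ M.verts) := by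
      rintro a ⟨haT, haM⟩ b ⟨hbT, hbM⟩ hab
      have h1 : M.Adj (g a) a := (hgadj a haM).symm
      have h2 : M.Adj (g a) b := hab ▸ (hgadj b hbM).symm
      obtain ⟨w, -, hu⟩ := hM (M.edge_vert h1)
      rw [hu a h1, hu b h2]
    have hle1 : (T ∩ M.verts).ncard ≤ (nbhd G T).ncard := by
      rw [← Set.ncard_image_of_injOn hinj]
      exact Set.ncard_le_ncard himg (Set.toFinite _)
    have hle2 : (T \ M.verts).ncard ≤ M.vertsᶜ.ncard :=
      Set.ncard_le_ncard (fun v hv => hv.2) (Set.toFinite _)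
    have hsplit : (T ∩ M.verts).ncard + (T \ M.verts).ncard = T.ncard :=
      Set.ncard_inter_add_ncard_diff_eq_ncard T M.verts (Set.toFinite T)
    omega
  have hD0 : (0 : ℤ) ∈ {d : ℤ | ∃ S : Set V, IsIndep G S ∧
      d = (S.ncard : ℤ) - ((nbhd G S).ncard : ℤ)} :=
    ⟨∅, by simp [IsIndep], by simp [nbhd]⟩
  have hub : critDiff G ≤ (Nat.card V : ℤ) - 2 * (matchNum G : ℤ) :=
    csSup_le ⟨0, hD0⟩ key
  have hlb : (Nat.card V : ℤ) - 2 * (matchNum G : ℤ) ≤ critDiff G := by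
    have hmem : ((S.ncard : ℤ) - ((nbhd G S).ncard : ℤ)) ∈ {d : ℤ | ∃ S : Set V,
        IsIndep G S ∧ d = (S.ncard : ℤ) - ((nbhd G S).ncard : ℤ)} := ⟨S, hSi, rfl⟩
    refine le_trans ?_ (le_csSup ⟨_, key⟩ hmem)
    have hnb : nbhd G S ⊆ Sᶜ := by
      rintro v ⟨w, hwS, hadj⟩ hvS
      exact hSi hvS hwS hadj.ne hadj
    have h1 : (nbhd G S).ncard ≤ Sᶜ.ncard := Set.ncard_le_ncard hnb (Set.toFinite _)
    have h2 : S.ncard + Sᶜ.ncard = Nat.card V := Set.ncard_add_ncard_compl S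
    have h3 : Nat.card V = indepNum G + matchNum G := hG
    omega
  exact le_antisymm hub hlb

end KEPaper
end

section
/- If G is a finite König–Egerváry graph, then the critical difference of G is zero if and only if G has a perfect matching. -/
namespace KEPaper

open SimpleGraph

variable {V : Type*}

lemma edge_unique {G : SimpleGraph V} {M : Subgraph G} (hM : M.IsMatching) {e f : Sym2 V}
    (he : e ∈ M.edgeSet) (hf : f ∈ M.edgeSet) {v : V} (hve : v ∈ e) (hvf : v ∈ f) :
    e = f := by
  obtain ⟨w, rfl⟩ := Sym2.mem_iff_exists.mp hve
  obtain ⟨u, rfl⟩ := Sym2.mem_iff_exists.mp hvf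
  have h1 := Subgraph.mem_edgeSet.mp he
  have h2 := Subgraph.mem_edgeSet.mp hf
  rw [(hM (M.edge_vert h1)).unique h1 h2]

lemma adj_out {G : SimpleGraph V} {M : Subgraph G} {e : Sym2 V} (he : e ∈ M.edgeSet) :
    M.Adj e.out.1 e.out.2 := by
  refine Subgraph.mem_edgeSet.mp ?_
  have : s(e.out.1, e.out.2) = e := by exact e.out_eq
  rwa [this]

lemma two_mul_edge_le [Finite V] {G : SimpleGraph V} {M : Subgraph G} (hM : M.IsMatching) :
    2 * M.edgeSet.ncard ≤ M.verts.ncard := by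
  classical
  set g : M.edgeSet × Bool → M.verts := fun p =>
    if p.2 then ⟨p.1.1.out.1, M.edge_vert (adj_out p.1.2)⟩
    else ⟨p.1.1.out.2, M.edge_vert (adj_out p.1.2).symm⟩ with hg
  have hinj : Function.Injective g := by
    rintro ⟨e, b⟩ ⟨f, c⟩ hef
    have hne : ∀ (e : M.edgeSet), e.1.out.1 ≠ e.1.out.2 := fun e => (adj_out e.2).ne
    cases b <;> cases c <;>
      simp only [hg, if_true, if_false, Subtype.mk.injEq, Prod.mk.injEq, Bool.false_eq_true,
        Bool.true_eq_false] at hef ⊢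
    · refine ⟨Subtype.ext ?_, trivial⟩
      exact edge_unique hM e.2 f.2 (Sym2.out_snd_mem e.1) (hef ▸ Sym2.out_snd_mem f.1)
    · exfalso
      have : e.1 = f.1 := edge_unique hM e.2 f.2 (Sym2.out_snd_mem e.1) (hef ▸ Sym2.out_fst_mem f.1)
      exact hne e (by rw [this, ← hef, this])
    · exfalso
      have : e.1 = f.1 := edge_unique hM e.2 f.2 (Sym2.out_fst_mem e.1) (hef ▸ Sym2.out_snd_mem f.1)
      exact hne e (by rw [this, ← hef, this])
    · refine ⟨Subtype.ext ?_, trivial⟩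
      exact edge_unique hM e.2 f.2 (Sym2.out_fst_mem e.1) (hef ▸ Sym2.out_fst_mem f.1)
  have := Nat.card_le_card_of_injective g hinj
  simpa [Nat.card_prod, Nat.card_coe_set_eq, mul_comm] using this

lemma nbhd_empty (G : SimpleGraph V) : nbhd G (∅ : Set V) = ∅ := by
  ext v; simp [nbhd]

lemma critSet_nonempty (G : SimpleGraph V) :
    (0 : ℤ) ∈ {d : ℤ | ∃ S : Set V, IsIndep G S ∧ d = (S.ncard : ℤ) - ((nbhd G S).ncard : ℤ)} := by
  exact ⟨∅, Set.pairwise_empty _, by simp [nbhd_empty]⟩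

lemma critSet_bddAbove [Finite V] (G : SimpleGraph V) :
    BddAbove {d : ℤ | ∃ S : Set V, IsIndep G S ∧ d = (S.ncard : ℤ) - ((nbhd G S).ncard : ℤ)} := by
  refine ⟨(Nat.card V : ℤ), ?_⟩
  rintro d ⟨S, -, rfl⟩
  have h1 : S.ncard ≤ Nat.card V := by
    simpa [Set.ncard_univ] using Set.ncard_le_ncard (Set.subset_univ S) Set.finite_univ
  have h2 : (0 : ℤ) ≤ ((nbhd G S).ncard : ℤ) := Int.natCast_nonneg _
  omega

/-- If `G` is a finite König–Egerváry graph, then `d(G) = 0` if and only if `G`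
has a perfect matching. -/
theorem critDiff_eq_zero_iff_perfectMatching [Finite V] (G : SimpleGraph V)
    (hG : KoenigEgervary G) :
    critDiff G = 0 ↔ ∃ M : Subgraph G, M.IsPerfectMatching := by
  classical
  have hbdd := critSet_bddAbove G
  have h0mem := critSet_nonempty G
  constructor
  · intro hcd
    -- obtain a maximum independent set
    have hαmem : indepNum G ∈ {n | ∃ S : Set V, IsIndep G S ∧ S.ncard = n} := by
      refine Nat.sSup_mem ⟨0, ∅, Set.pairwise_empty _, by simp⟩ ⟨Nat.card V, ?_⟩
      rintro n ⟨S, -, rfl⟩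
      simpa [Set.ncard_univ] using Set.ncard_le_ncard (Set.subset_univ S) Set.finite_univ
    obtain ⟨S, hS, hScard⟩ := hαmem
    -- obtain a maximum matching
    have hμmem : matchNum G ∈ {n | ∃ M : Subgraph G, M.IsMatching ∧ M.edgeSet.ncard = n} := by
      refine Nat.sSup_mem ⟨0, ⊥, fun v hv => by simp at hv, by simp⟩ ⟨Nat.card (Sym2 V), ?_⟩
      rintro n ⟨M, -, rfl⟩
      simpa [Set.ncard_univ] using
        Set.ncard_le_ncard (Set.subset_univ M.edgeSet) Set.finite_univ
    obtain ⟨M, hM, hMcard⟩ := hμmem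
    -- |S| - |N(S)| ≤ d(G) = 0
    have h1 : (S.ncard : ℤ) - ((nbhd G S).ncard : ℤ) ≤ 0 := by
      rw [← hcd]
      exact le_csSup hbdd ⟨S, hS, rfl⟩
    -- N(S) ⊆ Sᶜ
    have h2 : nbhd G S ⊆ Sᶜ := by
      rintro v ⟨w, hw, hvw⟩ hvS
      rcases eq_or_ne v w with rfl | hne
      · exact G.irrefl hvw
      · exact hS hvS hw hne hvw
    have h3 : (nbhd G S).ncard ≤ Sᶜ.ncard := Set.ncard_le_ncard h2 (Set.toFinite _)
    have h4 : S.ncard + Sᶜ.ncard = Nat.card V := Set.ncard_add_ncard_compl S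
    have h5 : indepNum G ≤ matchNum G := by
      rw [KoenigEgervary] at hG
      omega
    have h6 := two_mul_edge_le hM
    have h7 : M.verts.ncard ≤ Nat.card V := by
      simpa [Set.ncard_univ] using Set.ncard_le_ncard (Set.subset_univ M.verts) Set.finite_univ
    have h8 : M.verts = Set.univ := by
      refine (Set.eq_of_subset_of_ncard_le (Set.subset_univ M.verts) ?_ (Set.toFinite _))
      rw [Set.ncard_univ]
      rw [KoenigEgervary] at hG
      omega
    exact ⟨M, hM, fun v => h8 ▸ Set.mem_univ v⟩
  · rintro ⟨M, hM, hMsp⟩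
    refine le_antisymm (csSup_le ⟨0, h0mem⟩ ?_) (le_csSup hbdd h0mem)
    rintro d ⟨S, hS, rfl⟩
    -- partner map is an injection from S into N(S)
    set f : V → V := fun v => (hM (hMsp v)).choose with hf
    have hadj : ∀ v, M.Adj v (f v) := fun v => (hM (hMsp v)).choose_spec.1
    have hmaps : ∀ a ∈ S, f a ∈ nbhd G S := fun a ha => ⟨a, ha, (hadj a).adj_sub.symm⟩
    have hinj : Set.InjOn f S := by
      intro a _ b _ hab
      have h1 : M.Adj (f a) a := (hadj a).symm
      have h2 : M.Adj (f a) b := hab ▸ (hadj b).symm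
      exact ((hM (hMsp (f a))).unique h1 h2)
    have := Set.ncard_le_ncard_of_injOn f hmaps hinj (Set.toFinite _)
    omega


end KEPaper
end

section
/- If a finite simple graph G has a maximum independent set that is also a critical independent set, then G is a König–Egerváry graph. -/
namespace KEPaper

open SimpleGraph

variable {V : Type*}

/-- If a finite simple graph `G` has a maximum independent set that is also a
critical independent set, then `G` is a König–Egerváry graph. -/
theorem KE_of_exists_maxIndep_critIndep [Finite V] (G : SimpleGraph V)
    (h : ∃ S : Set V, IsMaxIndep G S ∧ IsCritIndep G S) :
    KoenigEgervary G := by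
  classical
  haveI := Fintype.ofFinite V
  obtain ⟨S, ⟨hSind, hScard⟩, _, hScrit⟩ := h
  have hcardV : ∀ A : Set V, A.ncard ≤ Nat.card V := fun A => by
    simpa [Set.ncard_univ] using Set.ncard_le_ncard (Set.subset_univ A) Set.finite_univ
  -- critDiff set is bounded above
  have hcbdd : BddAbove {d : ℤ | ∃ A : Set V, IsIndep G A ∧
      d = (A.ncard : ℤ) - ((nbhd G A).ncard : ℤ)} := by
    refine ⟨(Nat.card V : ℤ), ?_⟩
    rintro d ⟨A, -, rfl⟩
    have := hcardV A
    omega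
  -- any independent set satisfies the critical bound
  have hub : ∀ A : Set V, IsIndep G A →
      (A.ncard : ℤ) - ((nbhd G A).ncard : ℤ) ≤ (S.ncard : ℤ) - ((nbhd G S).ncard : ℤ) := by
    intro A hA
    rw [hScrit]
    exact le_csSup hcbdd ⟨A, hA, rfl⟩
  -- indepNum set bounded above
  have hibdd : BddAbove {n : ℕ | ∃ A : Set V, IsIndep G A ∧ A.ncard = n} :=
    ⟨Nat.card V, by rintro n ⟨A, -, rfl⟩; exact hcardV A⟩
  -- S is maximal: every vertex outside S has a neighbor in S
  have hmax : ∀ v ∉ S, ∃ w ∈ S, G.Adj v w := by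
    intro v hv
    by_contra hc
    push_neg at hc
    have hsymm : Symmetric (fun u w : V => ¬ G.Adj u w) := fun u w h hadj => h hadj.symm
    have hind : IsIndep G (insert v S) := by
      haveI : Std.Symm (fun u w : V => ¬ G.Adj u w) := ⟨fun _ _ h => hsymm h⟩
      rw [IsIndep, Set.pairwise_insert_of_symmetric]
      exact ⟨hSind, fun b hb _ hadj => hc b hb hadj⟩
    have hle : (insert v S).ncard ≤ indepNum G := le_csSup hibdd ⟨_, hind, rfl⟩
    rw [Set.ncard_insert_of_notMem hv S.toFinite] at hle
    omega
  -- Hall's condition for the bipartite graph between Sᶜ and S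
  have hadjS : ∀ x : ↥(Sᶜ), ∀ y, y ∈ G.neighborFinset (x : V) ∩ S.toFinset ↔
      G.Adj (x : V) y ∧ y ∈ S := by
    intro x y
    simp [Finset.mem_inter]
  have hall : ∀ s : Finset ↥(Sᶜ),
      s.card ≤ (s.biUnion (fun x => G.neighborFinset (x : V) ∩ S.toFinset)).card := by
    intro s
    set T : Set V := Subtype.val '' (s : Set ↥(Sᶜ)) with hTdef
    have hTcard : T.ncard = s.card := by
      rw [hTdef, Set.ncard_image_of_injective _ Subtype.val_injective, Set.ncard_coe_finset]
    have hBU : ((s.biUnion (fun x => G.neighborFinset (x : V) ∩ S.toFinset)) : Set V)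
        = nbhd G T ∩ S := by
      ext y
      simp only [Finset.coe_biUnion, Set.mem_iUnion, Finset.mem_coe, Set.mem_inter_iff]
      constructor
      · rintro ⟨x, hx, hy⟩
        rw [hadjS] at hy
        exact ⟨⟨x, ⟨x, hx, rfl⟩, hy.1.symm⟩, hy.2⟩
      · rintro ⟨⟨w, ⟨x, hx, rfl⟩, hadj⟩, hyS⟩
        exact ⟨x, hx, (hadjS x y).mpr ⟨hadj.symm, hyS⟩⟩
    set A : Set V := S \ nbhd G T with hAdef
    have hAind : IsIndep G A := hSind.mono Set.diff_subset
    have hNTS : nbhd G T ∩ S ⊆ S := Set.inter_subset_right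
    have hAeq : A = S \ (nbhd G T ∩ S) := by
      rw [hAdef]; ext y; simp only [Set.mem_diff, Set.mem_inter_iff]; tauto
    have hAcard : A.ncard = S.ncard - (nbhd G T ∩ S).ncard := by
      rw [hAeq, Set.ncard_diff hNTS]
    have hNTSle : (nbhd G T ∩ S).ncard ≤ S.ncard := Set.ncard_le_ncard hNTS S.toFinite
    have hTsub : T ⊆ nbhd G S := by
      rintro v ⟨x, hx, rfl⟩
      obtain ⟨w, hwS, hadj⟩ := hmax (x : V) x.2
      exact ⟨w, hwS, hadj⟩
    have hNA : nbhd G A ⊆ nbhd G S \ T := by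
      rintro v ⟨a, ⟨haS, hanT⟩, hadj⟩
      refine ⟨⟨a, haS, hadj⟩, fun hvT => hanT ⟨v, hvT, hadj.symm⟩⟩
    have h2 : (nbhd G A).ncard + T.ncard ≤ (nbhd G S).ncard := by
      have h3 : (nbhd G A).ncard ≤ (nbhd G S \ T).ncard :=
        Set.ncard_le_ncard hNA (nbhd G S \ T).toFinite
      have h4 : (nbhd G S \ T).ncard = (nbhd G S).ncard - T.ncard :=
        Set.ncard_diff hTsub
      have h5 : T.ncard ≤ (nbhd G S).ncard := Set.ncard_le_ncard hTsub (nbhd G S).toFinite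
      omega
    have h6 := hub A hAind
    have hgoal : s.card ≤ (nbhd G T ∩ S).ncard := by omega
    calc s.card ≤ (nbhd G T ∩ S).ncard := hgoal
      _ = ((s.biUnion (fun x => G.neighborFinset (x : V) ∩ S.toFinset)) : Set V).ncard := by
          rw [hBU]
      _ = _ := Set.ncard_coe_finset _
  obtain ⟨f, hfinj, hf⟩ := (Finset.all_card_le_biUnion_card_iff_exists_injective
    (fun x : ↥(Sᶜ) => G.neighborFinset (x : V) ∩ S.toFinset)).mp hall
  have hadjf : ∀ x : ↥(Sᶜ), G.Adj (x : V) (f x) := fun x => ((hadjS x (f x)).mp (hf x)).1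
  have hfS : ∀ x : ↥(Sᶜ), f x ∈ S := fun x => ((hadjS x (f x)).mp (hf x)).2
  -- build the matching
  let M : Subgraph G := {
    verts := Sᶜ ∪ Set.range f
    Adj := fun a b => ∃ x : ↥(Sᶜ), (a = ↑x ∧ b = f x) ∨ (a = f x ∧ b = ↑x)
    adj_sub := by
      rintro a b ⟨x, ⟨rfl, rfl⟩ | ⟨rfl, rfl⟩⟩
      · exact hadjf x
      · exact (hadjf x).symm
    edge_vert := by
      rintro a b ⟨x, ⟨rfl, rfl⟩ | ⟨rfl, rfl⟩⟩
      · exact Or.inl x.2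
      · exact Or.inr ⟨x, rfl⟩
    symm := by
      constructor
      rintro a b ⟨x, ⟨rfl, rfl⟩ | ⟨rfl, rfl⟩⟩
      · exact ⟨x, Or.inr ⟨rfl, rfl⟩⟩
      · exact ⟨x, Or.inl ⟨rfl, rfl⟩⟩ }
  have hMmatch : M.IsMatching := by
    rintro v (hv | ⟨x, rfl⟩)
    · refine ⟨f ⟨v, hv⟩, ⟨⟨v, hv⟩, Or.inl ⟨rfl, rfl⟩⟩, ?_⟩
      rintro w ⟨y, ⟨h1, rfl⟩ | ⟨h1, rfl⟩⟩
      · have : (⟨v, hv⟩ : ↥(Sᶜ)) = y := Subtype.ext h1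
        rw [this]
      · exact absurd (h1 ▸ hfS y) hv
    · refine ⟨(x : V), ⟨x, Or.inr ⟨rfl, rfl⟩⟩, ?_⟩
      rintro w ⟨y, ⟨h1, rfl⟩ | ⟨h1, rfl⟩⟩
      · exact absurd (h1 ▸ hfS x) y.2
      · rw [hfinj h1]
  have hMedge : M.edgeSet = Set.range (fun x : ↥(Sᶜ) => s((x : V), f x)) := by
    ext e
    induction e using Sym2.ind with
    | _ a b =>
      simp only [Subgraph.mem_edgeSet, Set.mem_range]
      constructor
      · rintro ⟨x, ⟨rfl, rfl⟩ | ⟨rfl, rfl⟩⟩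
        · exact ⟨x, rfl⟩
        · exact ⟨x, Sym2.eq_swap⟩
      · rintro ⟨x, hx⟩
        rw [Sym2.eq_iff] at hx
        rcases hx with ⟨h1, h2⟩ | ⟨h1, h2⟩
        · exact ⟨x, Or.inl ⟨h1.symm, h2.symm⟩⟩
        · exact ⟨x, Or.inr ⟨h2.symm, h1.symm⟩⟩
  have hginj : Function.Injective (fun x : ↥(Sᶜ) => s((x : V), f x)) := by
    intro x y hxy
    simp only [Sym2.eq_iff] at hxy
    rcases hxy with ⟨h1, _⟩ | ⟨h1, _⟩
    · exact Subtype.coe_injective h1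
    · exact absurd (h1 ▸ hfS y) x.2
  have hMcard : M.edgeSet.ncard = Sᶜ.ncard := by
    rw [hMedge, ← Set.image_univ, Set.ncard_image_of_injective _ hginj,
      Set.ncard_univ, Nat.card_coe_set_eq]
  -- every matching has at most |Sᶜ| edges
  have hmub : ∀ n ∈ {n : ℕ | ∃ M' : Subgraph G, M'.IsMatching ∧ M'.edgeSet.ncard = n},
      n ≤ Sᶜ.ncard := by
    rintro n ⟨M', hM', rfl⟩
    have hpick : ∀ e ∈ M'.edgeSet, ∃ v, v ∈ e ∧ v ∉ S := by
      intro e he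
      induction e using Sym2.ind with
      | _ a b =>
        rw [Subgraph.mem_edgeSet] at he
        have hG := he.adj_sub
        by_contra hc
        push_neg at hc
        exact hSind (hc a (Sym2.mem_mk_left a b)) (hc b (Sym2.mem_mk_right a b)) hG.ne hG
    have hrep : ∀ e ∈ M'.edgeSet, ∀ v ∈ e, ∃ w, e = s(v, w) ∧ M'.Adj v w := by
      intro e he
      induction e using Sym2.ind with
      | _ a b =>
        rw [Subgraph.mem_edgeSet] at he
        intro v hv
        rw [Sym2.mem_iff] at hv
        rcases hv with rfl | rfl
        · exact ⟨b, rfl, he⟩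
        · exact ⟨a, Sym2.eq_swap, he.symm⟩
    let φ : M'.edgeSet → ↥(Sᶜ) := fun e =>
      ⟨(hpick e.1 e.2).choose, (hpick e.1 e.2).choose_spec.2⟩
    have hφinj : Function.Injective φ := by
      intro e₁ e₂ hφ
      set v := (hpick e₁.1 e₁.2).choose with hvdef
      have hv1 : v ∈ e₁.1 := (hpick e₁.1 e₁.2).choose_spec.1
      have hv2 : (hpick e₂.1 e₂.2).choose ∈ e₂.1 := (hpick e₂.1 e₂.2).choose_spec.1
      have hveq : (hpick e₂.1 e₂.2).choose = v := by
        have := congrArg Subtype.val hφ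
        exact this.symm
      rw [hveq] at hv2
      obtain ⟨w₁, he₁, ha₁⟩ := hrep e₁.1 e₁.2 v hv1
      obtain ⟨w₂, he₂, ha₂⟩ := hrep e₂.1 e₂.2 v hv2
      have hvv : v ∈ M'.verts := M'.edge_vert ha₁
      obtain ⟨w, -, huniq⟩ := hM' hvv
      have : w₁ = w₂ := by rw [huniq w₁ ha₁, huniq w₂ ha₂]
      apply Subtype.ext
      rw [he₁, he₂, this]
    calc M'.edgeSet.ncard = Nat.card M'.edgeSet := (Nat.card_coe_set_eq _).symm
      _ ≤ Nat.card ↥(Sᶜ) := Nat.card_le_card_of_injective φ hφinj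
      _ = Sᶜ.ncard := Nat.card_coe_set_eq _
  have hbotmatch : (⊥ : Subgraph G).IsMatching := by
    intro v hv
    simp [Subgraph.verts_bot] at hv
  have hmn : matchNum G = Sᶜ.ncard := by
    refine le_antisymm (csSup_le ⟨0, ⊥, hbotmatch, by simp⟩ hmub)
      (le_csSup ⟨Sᶜ.ncard, hmub⟩ ⟨M, hMmatch, hMcard⟩)
  rw [KoenigEgervary, hmn, ← hScard, ← Set.ncard_add_ncard_compl S]
end KEPaper
end

section
/- If S is a critical independent set of a finite simple graph G, then there exists a matching of G that matches every vertex of N(S) to a vertex of S. -/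
namespace KEPaper

open SimpleGraph

variable {V : Type*}

/-- If `S` is a critical independent set of a finite simple graph `G`, then
there is a matching of `G` matching every vertex of `N(S)` to a vertex of `S`. -/
theorem matching_from_nbhd_of_critIndep [Finite V] (G : SimpleGraph V) (S : Set V)
    (hS : IsCritIndep G S) :
    ∃ M : Subgraph G, M.IsMatching ∧ ∀ v ∈ nbhd G S, ∃ w ∈ S, M.Adj v w := by
  classical
  haveI : Fintype V := Fintype.ofFinite V
  -- disjointness of S and N(S)
  have hdisj : ∀ x, x ∈ nbhd G S → x ∉ S := by
    rintro x ⟨w, hwS, hadj⟩ hxS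
    exact hS.1 hxS hwS hadj.ne hadj
  -- Hall setup
  set r : ↥(nbhd G S) → Finset V :=
    fun v => Finset.univ.filter (fun w => w ∈ S ∧ G.Adj ↑v w) with hr
  have hbdd : BddAbove {d : ℤ | ∃ T : Set V, IsIndep G T ∧
      d = (T.ncard : ℤ) - ((nbhd G T).ncard : ℤ)} := by
    refine ⟨(Nat.card V : ℤ), ?_⟩
    rintro d ⟨T, _, rfl⟩
    have h1 : T.ncard ≤ Nat.card V := by
      rw [← Set.ncard_univ]
      exact Set.ncard_le_ncard (Set.subset_univ T) Set.finite_univ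
    have : ((nbhd G T).ncard : ℤ) ≥ 0 := Int.ofNat_nonneg _
    omega
  have hall : ∀ A : Finset ↥(nbhd G S), A.card ≤ (A.biUnion r).card := by
    intro A
    by_contra hlt
    push_neg at hlt
    set B := A.biUnion r with hB
    set T : Set V := ↑(A.image Subtype.val) with hT
    set S' := S \ ↑B with hS'
    have hBS : (↑B : Set V) ⊆ S := by
      intro w hw
      simp only [hB, Finset.coe_biUnion, Set.mem_iUnion] at hw
      obtain ⟨a, _, hw⟩ := hw
      simp only [hr, Finset.coe_filter, Set.mem_setOf_eq] at hw
      exact hw.2.1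
    have hTN : T ⊆ nbhd G S := by
      rintro x hx
      simp only [hT, Finset.coe_image, Set.mem_image] at hx
      obtain ⟨a, _, rfl⟩ := hx
      exact a.2
    have hTcard : T.ncard = A.card := by
      rw [hT, Set.ncard_coe_finset, Finset.card_image_of_injective _ Subtype.val_injective]
    have hNsub : nbhd G S' ⊆ nbhd G S \ T := by
      rintro x ⟨w, hwS', hadj⟩
      refine ⟨⟨w, hwS'.1, hadj⟩, ?_⟩
      intro hxT
      simp only [hT, Finset.coe_image, Set.mem_image] at hxT
      obtain ⟨a, haA, rfl⟩ := hxT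
      have : w ∈ B := by
        apply Finset.mem_biUnion.2 ⟨a, haA, ?_⟩
        simp only [hr, Finset.mem_filter]
        exact ⟨Finset.mem_univ w, hwS'.1, hadj⟩
      exact hwS'.2 this
    have hS'indep : IsIndep G S' := hS.1.mono Set.diff_subset
    have hS'card : S'.ncard = S.ncard - B.card := by
      rw [hS', Set.ncard_diff hBS, Set.ncard_coe_finset]
    have hBcard : B.card ≤ S.ncard := by
      rw [← Set.ncard_coe_finset]
      exact Set.ncard_le_ncard hBS (Set.toFinite S)
    have hNS'card : (nbhd G S').ncard ≤ (nbhd G S).ncard - A.card := by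
      calc (nbhd G S').ncard ≤ (nbhd G S \ T).ncard :=
            Set.ncard_le_ncard hNsub (Set.toFinite _)
        _ = (nbhd G S).ncard - T.ncard := Set.ncard_diff hTN
        _ = (nbhd G S).ncard - A.card := by rw [hTcard]
    have hAcard : A.card ≤ (nbhd G S).ncard := by
      rw [← hTcard]
      exact Set.ncard_le_ncard hTN (Set.toFinite _)
    have hmem : ((S'.ncard : ℤ) - ((nbhd G S').ncard : ℤ)) ∈
        {d : ℤ | ∃ T : Set V, IsIndep G T ∧
          d = (T.ncard : ℤ) - ((nbhd G T).ncard : ℤ)} := ⟨S', hS'indep, rfl⟩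
    have hle : (S'.ncard : ℤ) - ((nbhd G S').ncard : ℤ) ≤ critDiff G := le_csSup hbdd hmem
    rw [← hS.2] at hle
    have h1 : (S'.ncard : ℤ) = (S.ncard : ℤ) - B.card := by
      rw [hS'card]; omega
    have h2 : ((nbhd G S').ncard : ℤ) ≤ ((nbhd G S).ncard : ℤ) - A.card := by
      have := hNS'card; omega
    omega
  obtain ⟨f, hfinj, hf⟩ :=
    (Finset.all_card_le_biUnion_card_iff_exists_injective r).1 hall
  have hfS : ∀ v, f v ∈ S := fun v => by
    have := hf v; simp only [hr, Finset.mem_filter] at this; exact this.2.1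
  have hfadj : ∀ v : ↥(nbhd G S), G.Adj ↑v (f v) := fun v => by
    have := hf v; simp only [hr, Finset.mem_filter] at this; exact this.2.2
  refine ⟨⟨nbhd G S ∪ Set.range (fun v : ↥(nbhd G S) => f v),
    fun x y => (∃ hx : x ∈ nbhd G S, y = f ⟨x, hx⟩) ∨ (∃ hy : y ∈ nbhd G S, x = f ⟨y, hy⟩),
    ?_, ?_, ?_⟩, ?_, ?_⟩
  · rintro x y (⟨hx, rfl⟩ | ⟨hy, rfl⟩)
    · exact hfadj ⟨x, hx⟩
    · exact (hfadj ⟨y, hy⟩).symm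
  · rintro x y (⟨hx, rfl⟩ | ⟨hy, rfl⟩)
    · exact Or.inl hx
    · exact Or.inr ⟨⟨y, hy⟩, rfl⟩
  · refine ⟨?_⟩; rintro x y (⟨hx, rfl⟩ | ⟨hy, rfl⟩)
    · exact Or.inr ⟨hx, rfl⟩
    · exact Or.inl ⟨hy, rfl⟩
  · rintro v (hv | ⟨u, rfl⟩)
    · refine ⟨f ⟨v, hv⟩, Or.inl ⟨hv, rfl⟩, ?_⟩
      rintro w (⟨hv', rfl⟩ | ⟨hw, rfl⟩)
      · rfl
      · exact absurd (hfS ⟨w, hw⟩) (hdisj _ hv)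
    · refine ⟨↑u, Or.inr ⟨u.2, by rw [Subtype.eta]⟩, ?_⟩
      rintro w (⟨hv, h⟩ | ⟨hw, heq⟩)
      · exact absurd (hfS u) (hdisj _ hv)
      · have : u = ⟨w, hw⟩ := hfinj heq
        rw [this]
  · intro v hv
    exact ⟨f ⟨v, hv⟩, hfS _, Or.inl ⟨hv, rfl⟩⟩


end KEPaper
end
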